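/- Let C be a cluster of a weighted graph G with projection graph H. For every walk π between two vertices u,v ∈ C ∪ δC in H, there exists a walk π' between u and v in G with the same total weight and with the same set of non-projection edges. -/

import Mathlib

/-- The total weight of a walk: the sum of the weights of its edges. -/
def walkWeight {V : Type*} {G : SimpleGraph V} (w : Sym2 V → ℝ) {u v : V}
    (p : G.Walk u v) : ℝ :=
  (p.edges.map w).sum

/-- `p` is a weighted shortest path: a path whose weight is at most the
weight of any other path with the same endpoints. -/
def IsShortestW {V : Type*} (G : SimpleGraph V) (w : Sym2 V → ℝ) {u v : V}
    (p : G.Walk u v) : Prop :=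
  p.IsPath ∧ ∀ q : G.Walk u v, q.IsPath → walkWeight w p ≤ walkWeight w q

/-- Edge `e` is monitored by the pair `x, y` in the weighted graph `(G, w)` if
`x ≠ y` and `e` lies on every weighted shortest path between `x` and `y`. -/
def MonitorsW {V : Type*} (G : SimpleGraph V) (w : Sym2 V → ℝ) (x y : V)
    (e : Sym2 V) : Prop :=
  x ≠ y ∧ ∀ p : G.Walk x y, IsShortestW G w p → e ∈ p.edges

/-- The boundary `δC` of a cluster `C`: vertices outside `C` with a neighbor in `C`. -/
def boundary {V : Type*} (G : SimpleGraph V) (C : Set V) : Set V :=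
  {v | v ∉ C ∧ ∃ u ∈ C, G.Adj u v}

/-- A `C`-bypass: a weighted shortest path of `G` between two boundary vertices,
with at least two edges, all of whose internal vertices lie outside `C ∪ δC`. -/
def IsBypass {V : Type*} (G : SimpleGraph V) (w : Sym2 V → ℝ) (C : Set V)
    {u v : V} (p : G.Walk u v) : Prop :=
  u ∈ boundary G C ∧ v ∈ boundary G C ∧ IsShortestW G w p ∧ 2 ≤ p.length ∧
    ∀ x ∈ p.support, x ≠ u → x ≠ v → x ∉ C ∪ boundary G C

/-- `(H, wH)` is the projection of the cluster `C` of `(G, w)`: its edges are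
the edges of `G[C ∪ δC]` (with their original weights) together with a
projection edge, weighted by the `G`-distance (the weight of an associated
`C`-bypass), for each pair of boundary vertices joined by a `C`-bypass. -/
def IsProjection {V : Type*} (G : SimpleGraph V) (w : Sym2 V → ℝ) (C : Set V)
    (H : SimpleGraph V) (wH : Sym2 V → ℝ) : Prop :=
  (∀ u v : V, H.Adj u v ↔
      ((G.Adj u v ∧ u ∈ C ∪ boundary G C ∧ v ∈ C ∪ boundary G C) ∨
       (u ≠ v ∧ ∃ p : G.Walk u v, IsBypass G w C p))) ∧
  (∀ e ∈ G.edgeSet ∩ H.edgeSet, wH e = w e) ∧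
  (∀ u v : V, H.Adj u v → ¬ G.Adj u v →
      ∃ p : G.Walk u v, IsBypass G w C p ∧ wH s(u, v) = walkWeight w p)

lemma walkWeight_cons {V : Type*} {G : SimpleGraph V} (w : Sym2 V → ℝ) {a b c : V}
    (h : G.Adj a b) (p : G.Walk b c) :
    walkWeight w (SimpleGraph.Walk.cons h p) = w s(a, b) + walkWeight w p := by
  simp [walkWeight]

lemma walkWeight_append {V : Type*} {G : SimpleGraph V} (w : Sym2 V → ℝ) {a b c : V}
    (p : G.Walk a b) (q : G.Walk b c) :
    walkWeight w (p.append q) = walkWeight w p + walkWeight w q := by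
  simp [walkWeight]

lemma H_adj_mem {V : Type*} {G : SimpleGraph V} {w : Sym2 V → ℝ} {C : Set V}
    {H : SimpleGraph V} {wH : Sym2 V → ℝ} (hproj : IsProjection G w C H wH)
    {x y : V} (h : H.Adj x y) :
    x ∈ C ∪ boundary G C ∧ y ∈ C ∪ boundary G C := by
  rcases (hproj.1 x y).mp h with ⟨_, hx, hy⟩ | ⟨_, p, hb⟩
  · exact ⟨hx, hy⟩
  · exact ⟨Or.inr hb.1, Or.inr hb.2.1⟩

lemma endpoints_edge_not_mem {V : Type*} {G : SimpleGraph V} {a b : V}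
    {p : G.Walk a b} (hp : p.IsPath) (hl : 2 ≤ p.length) : s(a, b) ∉ p.edges := by
  cases p with
  | nil => simp at hl
  | cons h q =>
    rename_i c
    intro hmem
    rw [SimpleGraph.Walk.edges_cons, List.mem_cons] at hmem
    rcases hmem with heq | hmem
    · rw [Sym2.eq_iff] at heq
      rcases heq with ⟨_, hbc⟩ | ⟨hac, _⟩
      · subst hbc
        have : q = SimpleGraph.Walk.nil :=
          SimpleGraph.Walk.isPath_iff_eq_nil.mp hp.of_cons
        subst this
        simp at hl
      · exact h.ne hac
    · exact ((SimpleGraph.Walk.cons_isPath_iff h q).mp hp).2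
        (SimpleGraph.Walk.fst_mem_support_of_mem_edges q hmem)

lemma bypass_edge_not_H {V : Type*} {G : SimpleGraph V} {w : Sym2 V → ℝ} {C : Set V}
    {H : SimpleGraph V} {wH : Sym2 V → ℝ} (hproj : IsProjection G w C H wH)
    {a b : V} {p : G.Walk a b} (hb : IsBypass G w C p)
    {e : Sym2 V} (he : e ∈ p.edges) : e ∉ H.edgeSet := by
  induction e using Sym2.ind with
  | _ x y =>
    intro hH
    rw [SimpleGraph.mem_edgeSet] at hH
    have hx : x ∈ p.support := SimpleGraph.Walk.fst_mem_support_of_mem_edges p he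
    have hy : y ∈ p.support := SimpleGraph.Walk.snd_mem_support_of_mem_edges p he
    have hmem := H_adj_mem hproj hH
    -- each of x, y must be an endpoint of the bypass
    have hx' : x = a ∨ x = b := by
      by_contra hc
      push_neg at hc
      exact hb.2.2.2.2 x hx hc.1 hc.2 hmem.1
    have hy' : y = a ∨ y = b := by
      by_contra hc
      push_neg at hc
      exact hb.2.2.2.2 y hy hc.1 hc.2 hmem.2
    have hxy : x ≠ y := hH.ne
    have : s(x, y) = s(a, b) := by
      rcases hx' with rfl | rfl <;> rcases hy' with rfl | rfl <;>
        first | exact absurd rfl hxy | rw [Sym2.eq_swap] | rfl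
    rw [this] at he
    exact endpoints_edge_not_mem hb.2.2.1.1 hb.2.2.2.1 he

/-- Every walk between `u, v ∈ C ∪ δC` in the projection graph `H` yields a walk
between `u` and `v` in `G` with the same total weight and the same set of
non-projection edges. -/
theorem projection_walk_to_graph_walk {V : Type*} [Fintype V]
    (G : SimpleGraph V) (w : Sym2 V → ℝ) (hw : ∀ e, 0 ≤ w e)
    (C : Set V) (H : SimpleGraph V) (wH : Sym2 V → ℝ)
    (hproj : IsProjection G w C H wH)
    (u v : V) (hu : u ∈ C ∪ boundary G C) (hv : v ∈ C ∪ boundary G C)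
    (p : H.Walk u v) :
    ∃ q : G.Walk u v, walkWeight wH p = walkWeight w q ∧
      {e | e ∈ p.edges} ∩ (G.edgeSet ∩ H.edgeSet)
        = {e | e ∈ q.edges} ∩ (G.edgeSet ∩ H.edgeSet) := by
  clear hu hv
  induction p with
  | nil => exact ⟨SimpleGraph.Walk.nil, by simp [walkWeight]⟩
  | cons h p ih =>
    rename_i a b c
    obtain ⟨q, hwq, hsq⟩ := ih
    rw [Set.ext_iff] at hsq
    by_cases hG : G.Adj a b
    · refine ⟨SimpleGraph.Walk.cons hG q, ?_, ?_⟩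
      · rw [walkWeight_cons, walkWeight_cons, hwq,
          hproj.2.1 s(a, b) ⟨hG, h⟩]
      · ext e
        simp only [Set.mem_inter_iff, Set.mem_setOf_eq,
          SimpleGraph.Walk.edges_cons, List.mem_cons] at hsq ⊢
        constructor
        · rintro ⟨he | he, hS⟩
          · exact ⟨Or.inl he, hS⟩
          · exact ⟨Or.inr ((hsq e).mp ⟨he, hS⟩).1, hS⟩
        · rintro ⟨he | he, hS⟩
          · exact ⟨Or.inl he, hS⟩
          · exact ⟨Or.inr ((hsq e).mpr ⟨he, hS⟩).1, hS⟩
    · obtain ⟨pb, hbp, hwb⟩ := hproj.2.2 a b h hG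
      refine ⟨pb.append q, ?_, ?_⟩
      · rw [walkWeight_cons, walkWeight_append, hwq, hwb]
      · ext e
        simp only [Set.mem_inter_iff, Set.mem_setOf_eq,
          SimpleGraph.Walk.edges_cons, SimpleGraph.Walk.edges_append,
          List.mem_cons, List.mem_append] at hsq ⊢
        constructor
        · rintro ⟨he | he, hS⟩
          · exact absurd hS.1 (by rwa [he, SimpleGraph.mem_edgeSet])
          · exact ⟨Or.inr ((hsq e).mp ⟨he, hS⟩).1, hS⟩
        · rintro ⟨he | he, hS⟩
          · exact absurd hS.2 (bypass_edge_not_H hproj hbp he)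
          · exact ⟨Or.inr ((hsq e).mpr ⟨he, hS⟩).1, hS⟩
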